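/- Let k ≥ 1 be an integer, λ > 0, K > 0, θ ∈ ℝ, and let b : [0,∞) → [0,∞) be continuous with b_* ≤ b(t)² ≤ b^* for all t ≥ 0, where either (θ > k/2 and b^* ≥ b_* > 0) or (θ = k/2 and b^* ≥ b_* > 2λ). Set β(t,x) := b(t)(1+x)^θ. Then for every M₂ > 0 there is M₁ > 0 such that for all t ≥ 0 and all real x, y with 0 < x ≤ Ky one has (2λ x^k y² + β(t,x)² y²)/(1+y²) − 2β(t,x)² y⁴/(1+y²)² ≤ M₁ − M₂ · 2β(t,x)² y⁴ / ((1+y²)²(1 + log(1+y²))). -/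

import Mathlib

open MeasureTheory Filter Set
open scoped Topology NNReal ENNReal ComplexConjugate

noncomputable section

/-- The (non-normalized) Fourier integral `ĵ(ξ) = ∫ e^{-i x ξ} φ(x) dx`. -/
def nFT (φ : ℝ → ℂ) (ξ : ℝ) : ℂ :=
  ∫ x : ℝ, Complex.exp (-(Complex.I * ξ * x)) * φ x

/-- The unitary Fourier transform `(2π)^{-1/2} ∫ e^{-i x ξ} φ(x) dx`. -/
def uFT (φ : ℝ → ℂ) (ξ : ℝ) : ℂ :=
  (Real.sqrt (2 * Real.pi) : ℂ)⁻¹ * nFT φ ξ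

/-- `g` is (a representative of) the unitary Fourier transform of the real-valued
function `f`, in the sense of tempered distributions. -/
def HasFT (f : ℝ → ℝ) (g : ℝ → ℂ) : Prop :=
  ∀ φ : SchwartzMap ℝ ℂ, ∫ ξ : ℝ, g ξ * φ ξ = ∫ x : ℝ, (f x : ℂ) * uFT (⇑φ) x

/-- A choice of a Fourier transform representative for `f` (junk value `0` if none exists). -/
def ftOf (f : ℝ → ℝ) : ℝ → ℂ := by
  classical exact if h : ∃ g : ℝ → ℂ, HasFT f g then h.choose else 0

/-- The `H^s(ℝ)` norm: `‖f‖_{H^s}² = ∫ (1+ξ²)^s |f̂(ξ)|² dξ`. -/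
def hsNorm (s : ℝ) (f : ℝ → ℝ) : ℝ :=
  (∫ ξ : ℝ, (1 + ξ ^ 2) ^ s * ‖ftOf f ξ‖ ^ 2) ^ (1 / 2 : ℝ)

/-- Membership in the Sobolev space `H^s(ℝ)`. -/
def MemHs (s : ℝ) (f : ℝ → ℝ) : Prop :=
  (∃ g : ℝ → ℂ, HasFT f g) ∧
    Integrable (fun ξ : ℝ => (1 + ξ ^ 2) ^ s * ‖ftOf f ξ‖ ^ 2)

/-- The `L²(ℝ)` norm. -/
def l2Norm (f : ℝ → ℝ) : ℝ := (∫ x : ℝ, f x ^ 2) ^ (1 / 2 : ℝ)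

/-- The `L^∞(ℝ)` norm (essential supremum). -/
def lInfNorm (f : ℝ → ℝ) : ℝ := (eLpNorm f ⊤ volume).toReal

/-- The `W^{1,∞}(ℝ)` norm, `‖f‖_{L^∞} + ‖∂ₓ f‖_{L^∞}`. -/
def w1InfNorm (f : ℝ → ℝ) : ℝ := lInfNorm f + lInfNorm (deriv f)

/-- `(1-∂ₓ²)⁻¹ f = (1/2) e^{-|·|} ⋆ f`. -/
def helmInv (f : ℝ → ℝ) : ℝ → ℝ :=
  fun x => (1 / 2) * ∫ y : ℝ, Real.exp (-|x - y|) * f y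

/-- `F₁(u) = (1-∂ₓ²)⁻¹ ∂ₓ (u^{k+1})`. -/
def F1 (k : ℕ) (u : ℝ → ℝ) : ℝ → ℝ :=
  helmInv (deriv fun x => u x ^ (k + 1))

/-- `F₂(u) = ((2k-1)/2) (1-∂ₓ²)⁻¹ ∂ₓ (u^{k-1} (∂ₓ u)²)`. -/
def F2 (k : ℕ) (u : ℝ → ℝ) : ℝ → ℝ := fun x =>
  ((2 * (k : ℝ) - 1) / 2) * helmInv (deriv fun y => u y ^ (k - 1) * deriv u y ^ 2) x

/-- `F₃(u) = ((k-1)/2) (1-∂ₓ²)⁻¹ (u^{k-2} (∂ₓ u)³)`; it vanishes when `k = 1`. -/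
def F3 (k : ℕ) (u : ℝ → ℝ) : ℝ → ℝ := fun x =>
  (((k : ℝ) - 1) / 2) * helmInv (fun y => u y ^ (k - 2) * deriv u y ^ 3) x

/-- The nonlocal nonlinearity `F(u) = F₁(u) + F₂(u) + F₃(u)`. -/
def Fnl (k : ℕ) (u : ℝ → ℝ) : ℝ → ℝ := fun x => F1 k u x + F2 k u x + F3 k u x

/-- `j` is an admissible Friedrichs kernel: a Schwartz function whose Fourier transform
`ĵ(ξ) = ∫ e^{-ixξ} j(x) dx` takes real values in `[0,1]` and equals `1` on `[-1,1]`. -/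
def MollKernel (j : SchwartzMap ℝ ℝ) : Prop :=
  (∀ ξ : ℝ, ∃ r : ℝ, 0 ≤ r ∧ r ≤ 1 ∧ nFT (fun x => ((j x : ℝ) : ℂ)) ξ = r) ∧
  (∀ ξ : ℝ, |ξ| ≤ 1 → nFT (fun x => ((j x : ℝ) : ℂ)) ξ = 1)

/-- The Friedrichs mollifier `J_ε f = j_ε ⋆ f`, where `j_ε = ε⁻¹ j(·/ε)`. -/
def Jmol (j : ℝ → ℝ) (ε : ℝ) (f : ℝ → ℝ) : ℝ → ℝ :=
  fun x => ∫ y : ℝ, ε⁻¹ * j ((x - y) / ε) * f y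

/-- The pairing `(D^s f, D^s g)_{L²} = ∫ (1+ξ²)^s f̂(ξ) conj(ĝ(ξ)) dξ` (via Plancherel). -/
def dsPair (s : ℝ) (f g : ℝ → ℝ) : ℝ :=
  (∫ ξ : ℝ, (((1 + ξ ^ 2) ^ s : ℝ) : ℂ) * ftOf f ξ * conj (ftOf g ξ)).re

/-- `h = D^s f`, where `D^s = (1-∂ₓ²)^{s/2}` is the Fourier multiplier `(1+ξ²)^{s/2}`. -/
def IsDs (s : ℝ) (f h : ℝ → ℝ) : Prop :=
  HasFT h fun ξ => (((1 + ξ ^ 2) ^ (s / 2) : ℝ) : ℂ) * ftOf f ξ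

/-- `h = D^η ∂ₓ f`, the Fourier multiplier `(1+ξ²)^{η/2} (iξ)`. -/
def IsDsDx (η : ℝ) (f h : ℝ → ℝ) : Prop :=
  HasFT h fun ξ => (((1 + ξ ^ 2) ^ (η / 2) : ℝ) : ℂ) * (Complex.I * ξ) * ftOf f ξ

/-- `h = ∂ₓ f`, the Fourier multiplier `iξ`. -/
def IsDx (f h : ℝ → ℝ) : Prop :=
  HasFT h fun ξ => Complex.I * ξ * ftOf f ξ

/-- Continuity in time with values in `H^s`. -/
def HsContinuousOn (s : ℝ) (u : ℝ → ℝ → ℝ) (I : Set ℝ) : Prop :=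
  ∀ t₀ ∈ I, Tendsto (fun t => hsNorm s fun x => u t x - u t₀ x) (𝓝[I] t₀) (𝓝 0)

/-- `v` is the time derivative of `u` in the `H^s`-valued sense. -/
def HsDerivOn (s : ℝ) (u v : ℝ → ℝ → ℝ) (I : Set ℝ) : Prop :=
  ∀ t₀ ∈ I,
    Tendsto (fun t => hsNorm s fun x => (u t x - u t₀ x) / (t - t₀) - v t₀ x)
      (𝓝[I \ {t₀}] t₀) (𝓝 0)

/-- `u` is a solution on `[0,T]` of `∂ₜ u + u^k ∂ₓ u + F(u) = 0` with datum `u₀`: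
a continuous `H^s`-valued map satisfying the corresponding integral equation. -/
def IsSolutionOn (k : ℕ) (s T : ℝ) (u₀ : ℝ → ℝ) (u : ℝ → ℝ → ℝ) : Prop :=
  (∀ t ∈ Icc (0 : ℝ) T, MemHs s (u t)) ∧
  HsContinuousOn s u (Icc 0 T) ∧
  (∀ x : ℝ, u 0 x = u₀ x) ∧
  ∀ t ∈ Icc (0 : ℝ) T, ∀ x : ℝ,
    u t x = u₀ x - ∫ τ in (0 : ℝ)..t, (u τ x ^ k * deriv (u τ) x + Fnl k (u τ) x)

set_option maxHeartbeats 1000000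

lemma bracket_le' (c M₂ : ℝ) (hc0 : 0 < c) (hc1 : c < 1) (hM : 0 < M₂) :
    ∃ W : ℝ, 1 ≤ W ∧ ∀ w : ℝ, W ≤ w →
      w * (1 - w) / (1 + w) ^ 2 +
        2 * M₂ * w ^ 2 / ((1 + w) ^ 2 * (1 + Real.log (1 + w))) ≤ -c := by
  set δ : ℝ := (1 - c) / 6 with hδ
  have hδ0 : 0 < δ := by simp [hδ]; linarith
  refine ⟨max (max 1 (1 / δ)) (Real.exp (2 * M₂ / δ)), le_trans (le_max_left 1 _) (le_max_left _ _), ?_⟩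
  intro w hw
  have hw1 : 1 ≤ w := le_trans (le_trans (le_max_left 1 _) (le_max_left _ _)) hw
  have hw0 : 0 < w := by linarith
  have hδw : 1 ≤ δ * w := by
    have : 1 / δ ≤ w := le_trans (le_trans (le_max_right 1 _) (le_max_left _ _)) hw
    rw [div_le_iff₀ hδ0] at this
    linarith [this]
  have hlog : 2 * M₂ / δ ≤ Real.log (1 + w) := by
    have h1 : Real.exp (2 * M₂ / δ) ≤ w := le_trans (le_max_right _ _) hw
    calc 2 * M₂ / δ = Real.log (Real.exp (2 * M₂ / δ)) := (Real.log_exp _).symm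
      _ ≤ Real.log (1 + w) := Real.log_le_log (Real.exp_pos _) (by linarith)
  set Q : ℝ := 1 + Real.log (1 + w) with hQdef
  have hQ1 : 1 ≤ Q := by
    have : 0 ≤ Real.log (1 + w) := Real.log_nonneg (by linarith)
    simp [hQdef]; linarith
  have hQ0 : 0 < Q := by linarith
  have hP0 : (0:ℝ) < (1 + w) ^ 2 := by positivity
  have hMQ : 2 * M₂ ≤ δ * Q := by
    have : 2 * M₂ / δ ≤ Q := by simp [hQdef]; linarith [hlog]
    rw [div_le_iff₀ hδ0] at this; linarith
  -- key numerator estimate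
  have hinner : w * (1 - w) + δ * w ^ 2 + c * (1 + w) ^ 2 ≤ 0 := by
    have h2 : 1 + w ≤ (1 + δ) * w := by nlinarith
    nlinarith [sq_nonneg w, mul_pos hw0 hw0, sq_nonneg (1 - c), hδw]
  have hN : w * (1 - w) * Q + 2 * M₂ * w ^ 2 + c * ((1 + w) ^ 2 * Q) ≤ 0 := by
    have h1 : 2 * M₂ * w ^ 2 ≤ δ * Q * w ^ 2 := by nlinarith [sq_nonneg w]
    calc w * (1 - w) * Q + 2 * M₂ * w ^ 2 + c * ((1 + w) ^ 2 * Q)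
        ≤ w * (1 - w) * Q + δ * Q * w ^ 2 + c * ((1 + w) ^ 2 * Q) := by linarith
      _ = Q * (w * (1 - w) + δ * w ^ 2 + c * (1 + w) ^ 2) := by ring
      _ ≤ 0 := mul_nonpos_of_nonneg_of_nonpos (le_of_lt hQ0) hinner
  have heq : w * (1 - w) / (1 + w) ^ 2 + 2 * M₂ * w ^ 2 / ((1 + w) ^ 2 * Q) + c
      = (w * (1 - w) * Q + 2 * M₂ * w ^ 2 + c * ((1 + w) ^ 2 * Q)) / ((1 + w) ^ 2 * Q) := by
    field_simp
  have : w * (1 - w) / (1 + w) ^ 2 + 2 * M₂ * w ^ 2 / ((1 + w) ^ 2 * Q) + c ≤ 0 := by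
    rw [heq]
    exact div_nonpos_of_nonpos_of_nonneg hN (by positivity)
  linarith

/-- Let `k ≥ 1` be an integer, `λ > 0`, `K > 0`, `θ ∈ ℝ`, and let
`b : [0,∞) → [0,∞)` be continuous with `b_* ≤ b(t)² ≤ b^*` for all `t ≥ 0`, where either
(`θ > k/2` and `b^* ≥ b_* > 0`) or (`θ = k/2` and `b^* ≥ b_* > 2λ`).  Set
`β(t,x) = b(t)(1+x)^θ`.  Then for every `M₂ > 0` there is `M₁ > 0` such that for all
`t ≥ 0` and all `0 < x ≤ Ky`,
`(2λ x^k y² + β(t,x)² y²)/(1+y²) − 2β(t,x)² y⁴/(1+y²)²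
  ≤ M₁ − M₂ · 2β(t,x)² y⁴/((1+y²)²(1+log(1+y²)))`. -/
theorem lyapunov_inequality (k : ℕ) (hk : 1 ≤ k) (l K : ℝ) (hl : 0 < l) (hK : 0 < K)
    (θ bs bS : ℝ) (b : ℝ → ℝ) (hb : ContinuousOn b (Ici 0))
    (hbnn : ∀ t ∈ Ici (0 : ℝ), 0 ≤ b t)
    (hbb : ∀ t ∈ Ici (0 : ℝ), bs ≤ b t ^ 2 ∧ b t ^ 2 ≤ bS)
    (hcase : ((k : ℝ) / 2 < θ ∧ 0 < bs ∧ bs ≤ bS) ∨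
      (θ = (k : ℝ) / 2 ∧ 2 * l < bs ∧ bs ≤ bS)) :
    ∀ M₂ : ℝ, 0 < M₂ → ∃ M₁ : ℝ, 0 < M₁ ∧
      ∀ t ∈ Ici (0 : ℝ), ∀ x y : ℝ, 0 < x → x ≤ K * y →
        (2 * l * x ^ k * y ^ 2 + (b t * (1 + x) ^ θ) ^ 2 * y ^ 2) / (1 + y ^ 2) -
            2 * (b t * (1 + x) ^ θ) ^ 2 * y ^ 4 / (1 + y ^ 2) ^ 2 ≤
          M₁ - M₂ * (2 * (b t * (1 + x) ^ θ) ^ 2 * y ^ 4 /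
            ((1 + y ^ 2) ^ 2 * (1 + Real.log (1 + y ^ 2)))) := by
  intro M₂ hM₂
  have hk1 : (1:ℝ) ≤ (k:ℝ) := by exact_mod_cast hk
  have hbs : 0 < bs := by rcases hcase with ⟨_, h, _⟩ | ⟨_, h, _⟩ <;> linarith
  have hθ : 0 < θ := by rcases hcase with ⟨h, _, _⟩ | ⟨h, _, _⟩ <;> [linarith; (rw [h]; linarith)]
  have hbS : 0 < bS := by rcases hcase with ⟨_, _, h⟩ | ⟨_, _, h⟩ <;> linarith
  -- choose c ∈ (0,1) and C ≥ 0 with 2l x^k ≤ c·bs·(1+x)^{2θ} + C for all x ≥ 0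
  obtain ⟨c, hc0, hc1, C, hC0, H⟩ :
      ∃ c : ℝ, 0 < c ∧ c < 1 ∧ ∃ C : ℝ, 0 ≤ C ∧
        ∀ x : ℝ, 0 ≤ x → 2 * l * x ^ k ≤ c * bs * (1 + x) ^ (2 * θ) + C := by
    rcases hcase with ⟨hθk, hbs0, _⟩ | ⟨hθk, hbl, _⟩
    · -- θ > k/2
      set p : ℝ := 2 * θ - k with hp
      have hp0 : 0 < p := by simp only [hp]; linarith
      set M : ℝ := max 1 ((4 * l / bs) ^ (1 / p)) with hM
      have hM1 : (1:ℝ) ≤ M := le_max_left _ _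
      refine ⟨1/2, by norm_num, by norm_num, 2 * l * M ^ k, by positivity, ?_⟩
      intro x hx
      have hz : (0:ℝ) < 1 + x := by linarith
      have hsplit : (1 + x) ^ (2 * θ) = (1 + x) ^ k * (1 + x) ^ p := by
        rw [← Real.rpow_natCast (1 + x) k, ← Real.rpow_add hz]
        congr 1; simp [hp]
      have hxz : x ^ k ≤ (1 + x) ^ k := pow_le_pow_left₀ hx (by linarith) k
      by_cases hcase2 : 4 * l / bs ≤ (1 + x) ^ p
      · have h1 : 2 * l * (1 + x) ^ k ≤ 1/2 * bs * ((1 + x) ^ k * (1 + x) ^ p) := by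
          have h2 : 4 * l ≤ bs * (1 + x) ^ p := by
            rw [div_le_iff₀ hbs0] at hcase2; linarith [hcase2]
          have h3 : (0:ℝ) ≤ (1 + x) ^ k := by positivity
          nlinarith
        have h8 : 2 * l * x ^ k ≤ 2 * l * (1 + x) ^ k := by nlinarith
        have h9 : (0:ℝ) ≤ 2 * l * M ^ k := by positivity
        rw [hsplit]
        linarith
      · push_neg at hcase2
        have h4 : 1 + x ≤ (4 * l / bs) ^ (1 / p) := by
          have h5 : ((1 + x) ^ p) ^ (1 / p) ≤ (4 * l / bs) ^ (1 / p) :=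
            Real.rpow_le_rpow (by positivity) hcase2.le (by positivity)
          rwa [← Real.rpow_mul hz.le, mul_one_div, div_self (ne_of_gt hp0),
            Real.rpow_one] at h5
        have h6 : x ^ k ≤ M ^ k := by
          refine pow_le_pow_left₀ hx ?_ k
          calc x ≤ 1 + x := by linarith
            _ ≤ (4 * l / bs) ^ (1 / p) := h4
            _ ≤ M := le_max_right _ _
        have h7 : (0:ℝ) ≤ 1/2 * bs * (1 + x) ^ (2 * θ) := by positivity
        nlinarith
    · -- θ = k/2, bs > 2l
      refine ⟨2 * l / bs, by positivity, by rw [div_lt_one hbs]; linarith, 0, le_refl _, ?_⟩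
      intro x hx
      have h1 : (1 + x) ^ (2 * θ) = (1 + x) ^ k := by
        rw [hθk, show 2 * ((k:ℝ)/2) = (k:ℝ) by ring, Real.rpow_natCast]
      have h2 : x ^ k ≤ (1 + x) ^ k := pow_le_pow_left₀ hx (by linarith) k
      have hcb : 2 * l / bs * bs = 2 * l := div_mul_cancel₀ _ (ne_of_gt hbs)
      rw [h1, add_zero, hcb]
      nlinarith
  -- large-region threshold
  obtain ⟨W, hW1, hbr⟩ := bracket_le' c M₂ hc0 hc1 hM₂
  set R : ℝ := K * Real.sqrt W with hR
  have hsW : 0 < Real.sqrt W := Real.sqrt_pos.mpr (by linarith)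
  have hR0 : 0 < R := by positivity
  set B : ℝ := 2 * l * R ^ k + bS * (1 + R) ^ (2 * θ) * (1 + 2 * M₂) with hB
  have hB0 : 0 < B := by positivity
  refine ⟨C + B + 1, by linarith, ?_⟩
  intro t ht x y hx hxy
  have hy : 0 < y := by nlinarith
  have hden : (0:ℝ) < 1 + y ^ 2 := by positivity
  have hden2 : (0:ℝ) < (1 + y ^ 2) ^ 2 := by positivity
  have hL : (0:ℝ) ≤ Real.log (1 + y ^ 2) := Real.log_nonneg (by nlinarith)
  set Q : ℝ := 1 + Real.log (1 + y ^ 2) with hQdef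
  have hQ1 : (1:ℝ) ≤ Q := by simp only [hQdef]; linarith
  have hQ0 : (0:ℝ) < Q := by linarith
  set A : ℝ := (b t * (1 + x) ^ θ) ^ 2 with hA
  have hA0 : 0 ≤ A := sq_nonneg _
  have hpow2 : ((1 + x) ^ θ) ^ 2 = (1 + x) ^ (2 * θ) := by
    rw [← Real.rpow_natCast ((1 + x) ^ θ) 2,
      ← Real.rpow_mul (by linarith : (0:ℝ) ≤ 1 + x)]
    norm_num [mul_comm]
  have hAeq : A = b t ^ 2 * (1 + x) ^ (2 * θ) := by rw [hA, mul_pow, hpow2]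
  have hrpow_pos : (0:ℝ) < (1 + x) ^ (2 * θ) := Real.rpow_pos_of_pos (by linarith) _
  have hAlb : bs * (1 + x) ^ (2 * θ) ≤ A := by
    rw [hAeq]; exact mul_le_mul_of_nonneg_right (hbb t ht).1 hrpow_pos.le
  have hAub : A ≤ bS * (1 + x) ^ (2 * θ) := by
    rw [hAeq]; exact mul_le_mul_of_nonneg_right (hbb t ht).2 hrpow_pos.le
  have hQne : Q ≠ 0 := ne_of_gt hQ0
  have hdne : (1 + y ^ 2) ≠ 0 := ne_of_gt hden
  rw [le_sub_iff_add_le]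
  by_cases hyW : W ≤ y ^ 2
  · -- large region
    have hT1 : 2 * l * x ^ k * y ^ 2 / (1 + y ^ 2) ≤ c * bs * (1 + x) ^ (2 * θ) + C := by
      have h1 : 2 * l * x ^ k * y ^ 2 / (1 + y ^ 2) ≤ 2 * l * x ^ k := by
        rw [div_le_iff₀ hden]
        nlinarith [pow_nonneg hx.le k]
      linarith [H x hx.le]
    have hGle : y ^ 2 / (1 + y ^ 2) - 2 * y ^ 4 / (1 + y ^ 2) ^ 2 +
        2 * M₂ * y ^ 4 / ((1 + y ^ 2) ^ 2 * Q) ≤ -c := by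
      have hbr' := hbr (y ^ 2) hyW
      calc y ^ 2 / (1 + y ^ 2) - 2 * y ^ 4 / (1 + y ^ 2) ^ 2 +
            2 * M₂ * y ^ 4 / ((1 + y ^ 2) ^ 2 * Q)
          = y ^ 2 * (1 - y ^ 2) / (1 + y ^ 2) ^ 2 +
            2 * M₂ * (y ^ 2) ^ 2 / ((1 + y ^ 2) ^ 2 * (1 + Real.log (1 + y ^ 2))) := by
            rw [hQdef]; field_simp; ring
        _ ≤ -c := hbr'
    have hAG : A * (y ^ 2 / (1 + y ^ 2) - 2 * y ^ 4 / (1 + y ^ 2) ^ 2 +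
        2 * M₂ * y ^ 4 / ((1 + y ^ 2) ^ 2 * Q)) ≤ -(c * A) := by
      have := mul_le_mul_of_nonneg_left hGle hA0
      linarith [this]
    have hcA : c * (bs * (1 + x) ^ (2 * θ)) ≤ c * A :=
      mul_le_mul_of_nonneg_left hAlb hc0.le
    have hsplit2 : (2 * l * x ^ k * y ^ 2 + A * y ^ 2) / (1 + y ^ 2) -
        2 * A * y ^ 4 / (1 + y ^ 2) ^ 2 +
        M₂ * (2 * A * y ^ 4 / ((1 + y ^ 2) ^ 2 * Q)) =
        2 * l * x ^ k * y ^ 2 / (1 + y ^ 2) +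
        A * (y ^ 2 / (1 + y ^ 2) - 2 * y ^ 4 / (1 + y ^ 2) ^ 2 +
          2 * M₂ * y ^ 4 / ((1 + y ^ 2) ^ 2 * Q)) := by
      field_simp; ring
    rw [hsplit2]
    nlinarith
  · -- small region: y² < W
    push_neg at hyW
    have hyR : y ≤ Real.sqrt W := by
      rw [← Real.sqrt_sq hy.le]; exact Real.sqrt_le_sqrt (by linarith)
    have hxR : x ≤ R := le_trans hxy (by
      rw [hR]; exact mul_le_mul_of_nonneg_left hyR hK.le)
    have hAub2 : A ≤ bS * (1 + R) ^ (2 * θ) := by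
      refine le_trans hAub (mul_le_mul_of_nonneg_left ?_ hbS.le)
      exact Real.rpow_le_rpow (by linarith) (by linarith) (by linarith)
    have hT1' : 2 * l * x ^ k * y ^ 2 / (1 + y ^ 2) ≤ 2 * l * R ^ k := by
      have h1 : 2 * l * x ^ k * y ^ 2 / (1 + y ^ 2) ≤ 2 * l * x ^ k := by
        rw [div_le_iff₀ hden]
        nlinarith [pow_nonneg hx.le k]
      have h2 : x ^ k ≤ R ^ k := pow_le_pow_left₀ hx.le hxR k
      nlinarith
    have hT2 : A * y ^ 2 / (1 + y ^ 2) ≤ A := by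
      rw [div_le_iff₀ hden]; nlinarith
    have hT3 : (0:ℝ) ≤ 2 * A * y ^ 4 / (1 + y ^ 2) ^ 2 := by positivity
    have hT4 : M₂ * (2 * A * y ^ 4 / ((1 + y ^ 2) ^ 2 * Q)) ≤ 2 * M₂ * A := by
      have h1 : 2 * A * y ^ 4 / ((1 + y ^ 2) ^ 2 * Q) ≤ 2 * A := by
        rw [div_le_iff₀ (by positivity)]
        have hy4 : y ^ 4 ≤ (1 + y ^ 2) ^ 2 := by nlinarith [sq_nonneg y]
        have h01 := mul_le_mul_of_nonneg_left hy4 (by linarith : (0:ℝ) ≤ 2 * A)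
        have h02 := mul_le_mul_of_nonneg_left hQ1
          (by positivity : (0:ℝ) ≤ 2 * A * (1 + y ^ 2) ^ 2)
        nlinarith [h01, h02]
      have := mul_le_mul_of_nonneg_left h1 hM₂.le
      linarith [this]
    have hT5 : 2 * M₂ * A ≤ 2 * M₂ * (bS * (1 + R) ^ (2 * θ)) := by
      have := mul_le_mul_of_nonneg_left hAub2 (by linarith : (0:ℝ) ≤ 2 * M₂)
      linarith [this]
    rw [add_div]
    have hAB : A ≤ bS * (1 + R) ^ (2 * θ) := hAub2
    linarith [hT1', hT2, hT3, hT4, hT5, hAB, hB, hC0]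

end
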